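/- For β₁ᵍ > 0, as the threshold c tends to infinity, the attenuation function γ(β₁ᵍ, π, c, β₀ᵍ) tends to 1 − π, and hence the asymptotic relative bias b = 1 − γ tends to π. -/

import Mathlib

open MeasureTheory ProbabilityTheory Filter
open Real Set intervalIntegral

/-- Standard normal CDF. -/
noncomputable def Phi (x : ℝ) : ℝ := ((gaussianReal 0 1) (Set.Iic x)).toReal


lemma pdf01 (t : ℝ) : gaussianPDFReal 0 1 t = (Real.sqrt (2*π))⁻¹ * rexp (-t^2/2) := by
  simp [gaussianPDFReal]

lemma Phi_eq (x : ℝ) : Phi x = ∫ t in Set.Iic x, gaussianPDFReal 0 1 t := by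
  rw [Phi, gaussianReal_apply_eq_integral 0 one_ne_zero, ENNReal.toReal_ofReal]
  exact setIntegral_nonneg measurableSet_Iic fun t _ => gaussianPDFReal_nonneg 0 1 t

lemma support_pdf : Function.support (gaussianPDFReal 0 1) = Set.univ :=
  Set.eq_univ_of_forall fun t => (gaussianPDFReal_pos 0 1 t one_ne_zero).ne'

lemma Phi_pos (x : ℝ) : 0 < Phi x := by
  rw [Phi_eq]
  rw [setIntegral_pos_iff_support_of_nonneg_ae
    (ae_of_all _ fun t => gaussianPDFReal_nonneg 0 1 t)
    ((integrable_gaussianPDFReal 0 1).integrableOn)]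
  simp [support_pdf]

lemma Phi_lt_one (x : ℝ) : Phi x < 1 := by
  have h := integral_add_compl (measurableSet_Iic (a := x)) (integrable_gaussianPDFReal 0 1)
  rw [integral_gaussianPDFReal_eq_one 0 one_ne_zero, compl_Iic] at h
  have hpos : 0 < ∫ t in Set.Ioi x, gaussianPDFReal 0 1 t := by
    rw [setIntegral_pos_iff_support_of_nonneg_ae
      (ae_of_all _ fun t => gaussianPDFReal_nonneg 0 1 t)
      ((integrable_gaussianPDFReal 0 1).integrableOn)]
    simp [support_pdf]
  rw [Phi_eq]
  linarith

lemma cont_exp_mul (c : ℝ) : Continuous fun t : ℝ => rexp (c * t) := by fun_prop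

lemma integrableOn_exp_mul_Iic' {c : ℝ} (hc : 0 < c) (b : ℝ) :
    IntegrableOn (fun t => rexp (c * t)) (Iic b) := by
  refine integrableOn_Iic_of_intervalIntegral_norm_bounded (rexp (c*b)/c) b
    (fun y => (cont_exp_mul c).integrableOn_Ioc) tendsto_id
    (Filter.Eventually.of_forall fun y => ?_)
  simp only [id_eq]
  have h1 : ∫ x in y..b, ‖rexp (c * x)‖ = ∫ x in y..b, rexp (c * x) := by
    congr 1; ext x; exact Real.norm_of_nonneg (Real.exp_pos _).le
  rw [h1]
  have h2 : ∫ x in y..b, rexp (c * x) = c⁻¹ • ∫ x in c*y..c*b, rexp x :=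
    intervalIntegral.integral_comp_mul_left rexp hc.ne'
  rw [h2, integral_exp, smul_eq_mul, div_eq_inv_mul]
  have : rexp (c*b) - rexp (c*y) ≤ rexp (c*b) := by
    have := (Real.exp_pos (c*y)).le; linarith
  exact mul_le_mul_of_nonneg_left this (inv_nonneg.2 hc.le)

lemma integral_exp_mul_Iic' {c : ℝ} (hc : 0 < c) (b : ℝ) :
    ∫ t in Iic b, rexp (c * t) = rexp (c * b) / c := by
  have h := integral_Iic_of_hasDerivAt_of_tendsto'
    (f := fun t => rexp (c * t) / c) (f' := fun t => rexp (c * t)) (a := b) (m := 0)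
    (fun x _ => by
      have hd : HasDerivAt (fun t => rexp (c*t)/c) (rexp (c*x) * (c*1) / c) x :=
        (((hasDerivAt_id x).const_mul c).exp).div_const c
      rw [mul_one, mul_div_assoc, div_self hc.ne', mul_one] at hd
      exact hd)
    (integrableOn_exp_mul_Iic' hc b)
    (by
      have h1 : Tendsto (fun t : ℝ => c * t) atBot atBot :=
        Tendsto.const_mul_atBot hc tendsto_id
      have := (Real.tendsto_exp_atBot.comp h1).div_const c
      simpa using this)
  simpa using h

lemma Phi_le_mills {x : ℝ} (hx : x < 0) :
    Phi x ≤ (Real.sqrt (2*π))⁻¹ * rexp (-x^2/2) / (-x) := by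
  have hnx : 0 < -x := neg_pos.2 hx
  rw [Phi_eq]
  have hpt : ∀ t ∈ Iic x, gaussianPDFReal 0 1 t ≤
      (Real.sqrt (2*π))⁻¹ * rexp (x^2/2) * rexp ((-x) * t) := by
    intro t _
    rw [pdf01, mul_assoc, ← Real.exp_add]
    refine mul_le_mul_of_nonneg_left (Real.exp_le_exp.2 ?_) (by positivity)
    nlinarith [sq_nonneg (x - t)]
  have hint : IntegrableOn (fun t => (Real.sqrt (2*π))⁻¹ * rexp (x^2/2) * rexp ((-x) * t)) (Iic x) :=
    (integrableOn_exp_mul_Iic' hnx x).const_mul _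
  calc ∫ t in Iic x, gaussianPDFReal 0 1 t
      ≤ ∫ t in Iic x, (Real.sqrt (2*π))⁻¹ * rexp (x^2/2) * rexp ((-x) * t) :=
        setIntegral_mono_on ((integrable_gaussianPDFReal 0 1).integrableOn) hint
          measurableSet_Iic hpt
    _ = (Real.sqrt (2*π))⁻¹ * rexp (x^2/2) * (rexp ((-x) * x) / (-x)) := by
        rw [MeasureTheory.integral_const_mul, integral_exp_mul_Iic' hnx x]
    _ = (Real.sqrt (2*π))⁻¹ * rexp (-x^2/2) / (-x) := by
        have h : rexp (x^2/2) * rexp ((-x)*x) = rexp (-x^2/2) := by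
          rw [← Real.exp_add]; congr 1; ring
        rw [← h]; ring
  
lemma Phi_ge {x : ℝ} (δ : ℝ) (hδ : 0 < δ) (hx : x ≤ 0) :
    δ * gaussianPDFReal 0 1 (x - δ) ≤ Phi x := by
  rw [Phi_eq]
  have h1 : ∫ t in Icc (x - δ) x, gaussianPDFReal 0 1 (x - δ)
      ≤ ∫ t in Icc (x - δ) x, gaussianPDFReal 0 1 t := by
    refine setIntegral_mono_on (integrableOn_const (by simp) (by simp))
      ((integrable_gaussianPDFReal 0 1).integrableOn) measurableSet_Icc ?_
    intro t ht
    rw [pdf01, pdf01]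
    refine mul_le_mul_of_nonneg_left (Real.exp_le_exp.2 ?_) (by positivity)
    have h1 : x - δ ≤ t := ht.1
    have h2 : t ≤ x := ht.2
    nlinarith
  have h2 : ∫ t in Icc (x - δ) x, gaussianPDFReal 0 1 (x - δ)
      = δ * gaussianPDFReal 0 1 (x - δ) := by
    rw [setIntegral_const, Real.volume_real_Icc_of_le (by linarith), smul_eq_mul]
    ring_nf
  have h3 : ∫ t in Icc (x - δ) x, gaussianPDFReal 0 1 t
      ≤ ∫ t in Iic x, gaussianPDFReal 0 1 t := by
    refine setIntegral_mono_set ((integrable_gaussianPDFReal 0 1).integrableOn)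
      (ae_of_all _ fun t => gaussianPDFReal_nonneg 0 1 t)
      (HasSubset.Subset.eventuallyLE ?_)
    exact fun t ht => le_trans ht.2 le_rfl
  linarith

lemma Phi_tendsto_zero : Tendsto Phi atBot (nhds 0) := by
  have hb : Tendsto (fun x : ℝ => (Real.sqrt (2*π))⁻¹ * (-x)⁻¹) atBot (nhds 0) := by
    have : Tendsto (fun x : ℝ => -x) atBot atTop := tendsto_neg_atBot_atTop
    have h2 := (tendsto_inv_atTop_zero.comp this).const_mul ((Real.sqrt (2*π))⁻¹)
    simpa using h2
  refine tendsto_of_tendsto_of_tendsto_of_le_of_le' tendsto_const_nhds hb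
    (Filter.Eventually.of_forall fun x => (Phi_pos x).le) ?_
  filter_upwards [Filter.Iic_mem_atBot (-1 : ℝ)] with x hx
  have hx' : x ≤ -1 := hx
  have hx0 : x < 0 := lt_of_le_of_lt hx' (by norm_num)
  have hnx : (0:ℝ) < -x := by linarith
  refine le_trans (Phi_le_mills hx0) ?_
  have h1 : rexp (-x^2/2) ≤ 1 := Real.exp_le_one_iff.2 (by nlinarith)
  have h2 : (Real.sqrt (2*π))⁻¹ * rexp (-x^2/2) ≤ (Real.sqrt (2*π))⁻¹ * 1 :=
    mul_le_mul_of_nonneg_left h1 (by positivity)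
  calc (Real.sqrt (2*π))⁻¹ * rexp (-x^2/2) / (-x)
      ≤ ((Real.sqrt (2*π))⁻¹ * 1) / (-x) := (div_le_div_iff_of_pos_right hnx).2 h2
    _ = (Real.sqrt (2*π))⁻¹ * (-x)⁻¹ := by rw [mul_one, div_eq_mul_inv]

lemma aux_alg {C u v y a : ℝ} (hC : C ≠ 0) (hu : u ≠ 0) (hy : y ≠ 0) (ha : a ≠ 0) :
    (C * (v * u) / y) / ((a/2) * (C * u)) = (2/a) * v * y⁻¹ := by
  field_simp

lemma ratio_tendsto_zero {a : ℝ} (ha : 0 < a) :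
    Tendsto (fun x => Phi x / Phi (x + a)) atBot (nhds 0) := by
  set C := (Real.sqrt (2*π))⁻¹ with hC
  have hCpos : 0 < C := by positivity
  -- bound function
  have hb : Tendsto (fun x : ℝ => (2/a) * rexp (a*x/2 + a^2/8) * (-x)⁻¹) atBot (nhds 0) := by
    have h1 : Tendsto (fun x : ℝ => a*x/2 + a^2/8) atBot atBot := by
      apply Filter.tendsto_atBot_add_const_right
      exact (Tendsto.const_mul_atBot ha tendsto_id).atBot_div_const (by norm_num)
    have h2 : Tendsto (fun x : ℝ => (2/a) * rexp (a*x/2 + a^2/8)) atBot (nhds 0) := by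
      have := (Real.tendsto_exp_atBot.comp h1).const_mul (2/a)
      simpa using this
    have h3 : Tendsto (fun x : ℝ => (-x)⁻¹) atBot (nhds 0) :=
      tendsto_inv_atTop_zero.comp tendsto_neg_atBot_atTop
    have := h2.mul h3
    simpa using this
  refine tendsto_of_tendsto_of_tendsto_of_le_of_le' tendsto_const_nhds hb
    (Filter.Eventually.of_forall fun x => div_nonneg (Phi_pos x).le (Phi_pos _).le) ?_
  filter_upwards [Filter.Iic_mem_atBot (-a : ℝ)] with x hx
  have hx' : x ≤ -a := hx
  have hxa : x + a ≤ 0 := by linarith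
  have hx0 : x < 0 := by linarith
  have hnx : 0 < -x := by linarith
  -- lower bound on Phi (x+a)
  have hlow : (a/2) * gaussianPDFReal 0 1 (x + a/2) ≤ Phi (x+a) := by
    have := Phi_ge (x := x + a) (a/2) (by linarith) hxa
    have he : x + a - a/2 = x + a/2 := by ring
    rwa [he] at this
  have hpdf : gaussianPDFReal 0 1 (x + a/2) = C * rexp (-(x + a/2)^2/2) := pdf01 _
  have hlowpos : 0 < (a/2) * (C * rexp (-(x + a/2)^2/2)) := by positivity
  have hexp : rexp (-x^2/2) = rexp (a*x/2 + a^2/8) * rexp (-(x + a/2)^2/2) := by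
    rw [← Real.exp_add]; congr 1; ring
  calc Phi x / Phi (x+a) ≤ Phi x / ((a/2) * (C * rexp (-(x + a/2)^2/2))) := by
        refine div_le_div_of_nonneg_left (Phi_pos x).le hlowpos ?_
        rw [← hpdf]; exact hlow
    _ ≤ (C * rexp (-x^2/2) / (-x)) / ((a/2) * (C * rexp (-(x + a/2)^2/2))) :=
        (div_le_div_iff_of_pos_right hlowpos).2 (Phi_le_mills hx0)
    _ = (2/a) * rexp (a*x/2 + a^2/8) * (-x)⁻¹ := by
        rw [hexp]
        exact aux_alg hCpos.ne' (Real.exp_ne_zero _) hnx.ne' ha.ne'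

lemma gamma_alg {z w p : ℝ} (hw : w ≠ 0) (hE : z*(1-p)+w*p ≠ 0)
    (hE1 : 1-(z*(1-p)+w*p) ≠ 0) (hR : (1-p)*(z/w)+p ≠ 0) :
    p * (w - (z*(1-p)+w*p)) / ((z*(1-p)+w*p) * (1-(z*(1-p)+w*p))) =
      p*(1-p)*(1 - z/w) / (((1-p)*(z/w)+p) * (1-(z*(1-p)+w*p))) := by
  rw [div_eq_div_iff (mul_ne_zero hE hE1) (mul_ne_zero hR hE1)]
  field_simp
  ring

/-- Attenuation function `γ(β₁ᵍ, π, c, β₀ᵍ) = π(ω − E)/(E(1 − E))` with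
`E = ζ(1−π) + ωπ`, `ω = Φ(β₁ᵍ + β₀ᵍ − c)`, `ζ = Φ(β₀ᵍ − c)`. -/
noncomputable def gammaFn (b1 p c b0 : ℝ) : ℝ :=
  p * (Phi (b1 + b0 - c) - (Phi (b0 - c) * (1 - p) + Phi (b1 + b0 - c) * p)) /
    ((Phi (b0 - c) * (1 - p) + Phi (b1 + b0 - c) * p) *
      (1 - (Phi (b0 - c) * (1 - p) + Phi (b1 + b0 - c) * p)))

/-- For β₁ᵍ > 0, as the threshold c → ∞ the attenuation function γ tends to 1 − π
and the asymptotic relative bias b = 1 − γ tends to π. -/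
theorem stmt_4 (b1 b0 p : ℝ) (hp : p ∈ Set.Ioo (0:ℝ) 1) (hb1 : 0 < b1) :
    Tendsto (fun c => gammaFn b1 p c b0) atTop (nhds (1 - p)) ∧
      Tendsto (fun c => 1 - gammaFn b1 p c b0) atTop (nhds p) := by
  obtain ⟨hp0, hp1⟩ := hp
  have l1 : Tendsto (fun c : ℝ => b0 - c) atTop atBot := by
    simpa [sub_eq_add_neg] using
      tendsto_atBot_add_const_left atTop b0 tendsto_neg_atTop_atBot
  have l2 : Tendsto (fun c : ℝ => b1 + b0 - c) atTop atBot := by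
    simpa [sub_eq_add_neg] using
      tendsto_atBot_add_const_left atTop (b1 + b0) tendsto_neg_atTop_atBot
  have hz : Tendsto (fun c : ℝ => Phi (b0 - c)) atTop (nhds 0) := Phi_tendsto_zero.comp l1
  have hw : Tendsto (fun c : ℝ => Phi (b1 + b0 - c)) atTop (nhds 0) := Phi_tendsto_zero.comp l2
  have hr : Tendsto (fun c : ℝ => Phi (b0 - c) / Phi (b1 + b0 - c)) atTop (nhds 0) := by
    have heq : (fun c : ℝ => Phi (b0 - c) / Phi (b1 + b0 - c))
        = (fun x => Phi x / Phi (x + b1)) ∘ (fun c : ℝ => b0 - c) := by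
      funext c
      simp only [Function.comp_apply]
      rw [show b0 - c + b1 = b1 + b0 - c by ring]
    rw [heq]
    exact (ratio_tendsto_zero hb1).comp l1
  have key : (fun c => gammaFn b1 p c b0) = fun c : ℝ =>
      (p * (1 - p) * (1 - Phi (b0 - c) / Phi (b1 + b0 - c))) /
        (((1 - p) * (Phi (b0 - c) / Phi (b1 + b0 - c)) + p) *
          (1 - (Phi (b0 - c) * (1 - p) + Phi (b1 + b0 - c) * p))) := by
    funext c
    have hz0 := Phi_pos (b0 - c)
    have hz1 := Phi_lt_one (b0 - c)
    have hw0 := Phi_pos (b1 + b0 - c)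
    have hw1 := Phi_lt_one (b1 + b0 - c)
    simp only [gammaFn]
    set z := Phi (b0 - c) with hzdef
    set w := Phi (b1 + b0 - c) with hwdef
    have hE : 0 < z * (1 - p) + w * p := by nlinarith
    have hE1 : z * (1 - p) + w * p < 1 := by nlinarith
    have hE1' : (1:ℝ) - (z * (1 - p) + w * p) ≠ 0 := by linarith
    have hR : 0 < (1 - p) * (z / w) + p := by
      have := div_nonneg hz0.le hw0.le
      nlinarith
    exact gamma_alg hw0.ne' hE.ne' hE1' hR.ne'
  have hnum : Tendsto (fun c : ℝ => p * (1 - p) * (1 - Phi (b0 - c) / Phi (b1 + b0 - c)))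
      atTop (nhds (p * (1 - p) * (1 - 0))) :=
    tendsto_const_nhds.mul (tendsto_const_nhds.sub hr)
  have hden : Tendsto (fun c : ℝ =>
      ((1 - p) * (Phi (b0 - c) / Phi (b1 + b0 - c)) + p) *
        (1 - (Phi (b0 - c) * (1 - p) + Phi (b1 + b0 - c) * p)))
      atTop (nhds (((1 - p) * 0 + p) * (1 - (0 * (1 - p) + 0 * p)))) :=
    ((tendsto_const_nhds.mul hr).add tendsto_const_nhds).mul
      (tendsto_const_nhds.sub ((hz.mul tendsto_const_nhds).add (hw.mul tendsto_const_nhds)))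
  have hden_ne : ((1 - p) * 0 + p) * (1 - (0 * (1 - p) + 0 * p)) ≠ 0 := by
    simp only [mul_zero, zero_mul, zero_add, add_zero, sub_zero, mul_one]
    exact hp0.ne'
  have h := hnum.div hden hden_ne
  have hval : p * (1 - p) * (1 - 0) / (((1 - p) * 0 + p) * (1 - (0 * (1 - p) + 0 * p)))
      = 1 - p := by
    field_simp
    ring
  rw [hval] at h
  have h2 : Tendsto (fun c => gammaFn b1 p c b0) atTop (nhds (1 - p)) := by
    rw [key]; exact h
  refine ⟨h2, ?_⟩
  have h3 := (tendsto_const_nhds (α := ℝ) (x := (1:ℝ)) (f := atTop)).sub h2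
  simpa using h3
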